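/- Let Φ be a parking function on a finite set I and let S ⊆ I. Then park(Φ_{∩S}) is a parking function on S; that is, the parkization algorithm applied to the restriction of a parking function produces a parking function. -/

import Mathlib

/-!
STATEMENT 4: If `Φ` is a parking function on `I` and `S ⊆ I`, then the parkization of the
restriction `Φ_{∩S}` is a parking function on `S`.
-/

/-- `L` is a weak set composition of the finite set `I`. -/
def IsWeakSetComp {α : Type*} [DecidableEq α] (I : Finset α) (L : List (Finset α)) : Prop :=
  L.Pairwise Disjoint ∧ L.foldr (· ∪ ·) ∅ = I

/-- `L` is a parking function on the finite set `I`. -/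
def IsParkingFunction {α : Type*} [DecidableEq α] (I : Finset α) (L : List (Finset α)) : Prop :=
  IsWeakSetComp I L ∧ L.length = I.card ∧
    ∀ k, 1 ≤ k → k ≤ L.length → k ≤ ((L.take k).map Finset.card).sum

/-- One pass of the parkization algorithm: `parkAux Φ Γ` scans the blocks of `Γ` from left
to right, keeping a block `B` (appending it to the accumulator `Φ`) exactly when
`|Φ| + |B| ≥ ℓ(Φ) + 1`, and discarding it otherwise. -/
def parkAux {α : Type*} [DecidableEq α] :
    List (Finset α) → List (Finset α) → List (Finset α)
  | Φ, [] => Φ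
  | Φ, B :: Γ =>
    if (Φ.map Finset.card).sum + B.card ≥ Φ.length + 1 then parkAux (Φ ++ [B]) Γ
    else parkAux Φ Γ

/-- The parkization of a list of blocks. -/
def park {α : Type*} [DecidableEq α] (Γ : List (Finset α)) : List (Finset α) :=
  parkAux [] Γ

section ParkAuxLemmas
variable {α : Type*} [DecidableEq α]

lemma parkAux_sublist (acc Γ : List (Finset α)) : (parkAux acc Γ).Sublist (acc ++ Γ) := by
  induction Γ generalizing acc with
  | nil => simp [parkAux]
  | cons B Γ ih =>
    rw [parkAux]
    split
    · have := ih (acc ++ [B])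
      simpa using this
    · exact (ih acc).trans ((List.append_sublist_append_left acc).2 (List.sublist_cons_self B Γ))

lemma parkAux_prefix (acc Γ : List (Finset α))
    (h : ∀ k ≤ acc.length, k ≤ ((acc.take k).map Finset.card).sum) :
    ∀ k ≤ (parkAux acc Γ).length, k ≤ (((parkAux acc Γ).take k).map Finset.card).sum := by
  induction Γ generalizing acc with
  | nil => simpa [parkAux] using h
  | cons B Γ ih =>
    rw [parkAux]
    split
    next hc =>
      apply ih
      intro k hk
      simp only [List.length_append, List.length_singleton] at hk
      rcases Nat.lt_or_ge k (acc.length + 1) with h' | h'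
      · rw [List.take_append_of_le_length (by omega)]
        exact h k (by omega)
      · have hk1 : k = acc.length + 1 := by omega
        rw [List.take_of_length_le (by simp; omega)]
        simp only [List.map_append, List.sum_append, List.map_cons, List.map_nil,
          List.sum_cons, List.sum_nil]
        omega
    next hc => exact ih acc h

lemma parkAux_sum_len (acc Γ : List (Finset α))
    (h1 : acc.length ≤ (acc.map Finset.card).sum)
    (h2 : (acc.map Finset.card).sum + (Γ.map Finset.card).sum ≤ acc.length + Γ.length)
    (h3 : ∀ k, ((Γ.drop k).map Finset.card).sum ≤ (Γ.drop k).length) :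
    ((parkAux acc Γ).map Finset.card).sum = (acc.map Finset.card).sum + (Γ.map Finset.card).sum
    ∧ (parkAux acc Γ).length = (acc.map Finset.card).sum + (Γ.map Finset.card).sum := by
  induction Γ generalizing acc with
  | nil =>
    simp only [parkAux, List.map_nil, List.sum_nil, List.length_nil] at *
    omega
  | cons B Γ ih =>
    rw [parkAux]
    split
    next hc =>
      have := ih (acc ++ [B]) (by simp; omega) (by simp at h2 ⊢; omega)
        (fun k => by simpa using h3 (k + 1))
      simp at this ⊢
      omega
    next hc =>
      have hB : B.card = 0 := by omega
      have h3' := h3 1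
      simp only [List.drop_succ_cons, List.drop_zero] at h3'
      have := ih acc h1 (by simp at h2 ⊢; omega) (fun k => by simpa using h3 (k + 1))
      simp at this ⊢
      omega

lemma parkAux_union (acc Γ : List (Finset α))
    (h1 : acc.length ≤ (acc.map Finset.card).sum) :
    (parkAux acc Γ).foldr (· ∪ ·) ∅ = (acc ++ Γ).foldr (· ∪ ·) ∅ := by
  induction Γ generalizing acc with
  | nil => simp [parkAux]
  | cons B Γ ih =>
    rw [parkAux]
    split
    next hc =>
      rw [ih (acc ++ [B]) (by simp; omega)]
      simp [List.append_assoc]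
    next hc =>
      have hB : B = ∅ := Finset.card_eq_zero.mp (by omega)
      rw [ih acc h1, hB]
      simp [List.foldr_append]

lemma union_map_inter (Φ : List (Finset α)) (S : Finset α) :
    ((Φ.map (· ∩ S)).foldr (· ∪ ·) ∅ : Finset α) = (Φ.foldr (· ∪ ·) ∅) ∩ S := by
  induction Φ with
  | nil => simp
  | cons B Φ ih => simp [ih, Finset.union_inter_distrib_right]

lemma disjoint_foldr (B : Finset α) (L : List (Finset α)) (h : ∀ x ∈ L, Disjoint B x) :
    Disjoint B (L.foldr (· ∪ ·) ∅) := by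
  induction L with
  | nil => simp
  | cons C L ih =>
    simp only [List.foldr_cons, Finset.disjoint_union_right]
    exact ⟨h C (by simp), ih fun x hx => h x (by simp [hx])⟩

lemma sum_card_of_pairwise (L : List (Finset α)) (h : L.Pairwise Disjoint) :
    (L.map Finset.card).sum = (L.foldr (· ∪ ·) ∅).card := by
  induction L with
  | nil => simp
  | cons B L ih =>
    rw [List.pairwise_cons] at h
    have hd : Disjoint B (L.foldr (· ∪ ·) ∅) := disjoint_foldr B L h.1
    simp only [List.map_cons, List.sum_cons, List.foldr_cons]
    rw [Finset.card_union_of_disjoint hd, ih h.2]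

lemma sum_card_inter_le (L : List (Finset α)) (S : Finset α) :
    ((L.map (· ∩ S)).map Finset.card).sum ≤ (L.map Finset.card).sum := by
  induction L with
  | nil => simp
  | cons B L ih =>
    simp only [List.map_cons, List.sum_cons]
    exact Nat.add_le_add (Finset.card_le_card Finset.inter_subset_left) ih


end ParkAuxLemmas

theorem park_restrict_isParkingFunction {α : Type*} [DecidableEq α]
    (I S : Finset α) (hS : S ⊆ I) (Φ : List (Finset α))
    (hΦ : IsParkingFunction I Φ) :
    IsParkingFunction S (park (Φ.map (· ∩ S))) := by

  obtain ⟨⟨hpw, hU⟩, hlen, hpk⟩ := hΦ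
  set Γ := Φ.map (· ∩ S) with hΓ
  have hpwΓ : Γ.Pairwise Disjoint :=
    hpw.map _ (fun _ _ hab => hab.mono Finset.inter_subset_left Finset.inter_subset_left)
  have hUΓ : Γ.foldr (· ∪ ·) ∅ = S := by
    rw [hΓ, union_map_inter, hU, Finset.inter_eq_right.mpr hS]
  have sumΦ : (Φ.map Finset.card).sum = I.card := by rw [sum_card_of_pairwise Φ hpw, hU]
  have sumΓ : (Γ.map Finset.card).sum = S.card := by rw [sum_card_of_pairwise Γ hpwΓ, hUΓ]
  have hsufΦ : ∀ k, ((Φ.drop k).map Finset.card).sum ≤ (Φ.drop k).length := by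
    intro k
    rcases le_or_gt Φ.length k with h | h
    · simp [List.drop_eq_nil_of_le h]
    · have htd : ((Φ.take k).map Finset.card).sum + ((Φ.drop k).map Finset.card).sum
          = I.card := by
        rw [← sumΦ, ← List.sum_append, ← List.map_append, List.take_append_drop]
      have hld : (Φ.drop k).length = Φ.length - k := List.length_drop (i := k) (l := Φ)
      rcases Nat.eq_zero_or_pos k with rfl | hk
      · simp only [List.take_zero, List.map_nil, List.sum_nil, Nat.zero_add] at htd
        omega
      · have := hpk k hk (le_of_lt h)
        omega
  have hsufΓ : ∀ k, ((Γ.drop k).map Finset.card).sum ≤ (Γ.drop k).length := by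
    intro k
    have hdm : Γ.drop k = (Φ.drop k).map (· ∩ S) := by
      rw [hΓ]; induction Φ generalizing k with
      | nil => simp
      | cons B Φ ih =>
        cases k with
        | zero => simp
        | succ k => simpa using ih k
    rw [hdm, List.length_map]
    exact le_trans (sum_card_inter_le _ _) (hsufΦ k)
  have hpark : park Γ = parkAux [] Γ := rfl
  have hsl := parkAux_sum_len [] Γ (by simp) (by simpa using hsufΓ 0) hsufΓ
  refine ⟨⟨?_, ?_⟩, ?_, ?_⟩
  · rw [hpark]
    exact List.Pairwise.sublist (by simpa using parkAux_sublist [] Γ) hpwΓ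
  · rw [hpark, parkAux_union [] Γ (by simp)]
    simpa using hUΓ
  · rw [hpark]
    simpa [sumΓ] using hsl.2
  · intro k hk1 hk2
    rw [hpark] at hk2 ⊢
    exact parkAux_prefix [] Γ (by intro k hk; simp_all) k hk2
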